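/- arXiv:2304.07529 — 3 statements merged into one kernel-verified Lean document; each statement's English description precedes it below -/
import Mathlib

section
/- Let G be a finite abelian group, M a duality on G, and M^T the transpose duality defined by χ'_x(y) = χ_y(x). An additive code C ≤ G^n satisfies C ∩ C^M = {0} if and only if C ∩ C^{M^T} = {0}. -/
/-- A duality `M` on a finite abelian group `G`: an isomorphism `x ↦ χ_x`
from `G` onto its character group `Hom(G, ℂ*)`. -/
structure Duality (G : Type*) [AddCommGroup G] where
  χ : G → G → ℂˣ
  add_left : ∀ x y z : G, χ (x + y) z = χ x z * χ y z
  add_right : ∀ x y z : G, χ x (y + z) = χ x y * χ x z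
  bij : ∀ ψ : G → ℂˣ, (∀ y z : G, ψ (y + z) = ψ y * ψ z) → ∃! x : G, χ x = ψ

namespace Duality

variable {G : Type*} [AddCommGroup G]

lemma zero_left (M : Duality G) (z : G) : M.χ 0 z = 1 := by
  have h := M.add_left 0 0 z
  rw [add_zero] at h
  exact mul_left_cancel (h.symm.trans (mul_one _).symm)

lemma zero_right (M : Duality G) (z : G) : M.χ z 0 = 1 := by
  have h := M.add_right z 0 0
  rw [add_zero] at h
  exact mul_left_cancel (h.symm.trans (mul_one _).symm)

lemma neg_left (M : Duality G) (x z : G) : M.χ (-x) z = (M.χ x z)⁻¹ := by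
  have h := M.add_left x (-x) z
  rw [add_neg_cancel, M.zero_left] at h
  exact (inv_eq_of_mul_eq_one_right h.symm).symm

lemma neg_right (M : Duality G) (x z : G) : M.χ z (-x) = (M.χ z x)⁻¹ := by
  have h := M.add_right z x (-x)
  rw [add_neg_cancel, M.zero_right] at h
  exact (inv_eq_of_mul_eq_one_right h.symm).symm

/-- The `M`-dual of an additive code `C ≤ G^n`:
`C^M = {x : ∏ i, χ_{x i}(c i) = 1 for all c ∈ C}`. -/
def dualCode {n : ℕ} (M : Duality G) (C : AddSubgroup (Fin n → G)) :
    AddSubgroup (Fin n → G) where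
  carrier := {x | ∀ c ∈ C, ∏ i, M.χ (x i) (c i) = 1}
  zero_mem' := by
    intro c _
    simp [Duality.zero_left]
  add_mem' := by
    intro a b ha hb c hc
    have h : ∏ i, M.χ ((a + b) i) (c i)
        = (∏ i, M.χ (a i) (c i)) * ∏ i, M.χ (b i) (c i) := by
      rw [← Finset.prod_mul_distrib]
      exact Finset.prod_congr rfl fun i _ => M.add_left (a i) (b i) (c i)
    rw [h, ha c hc, hb c hc, mul_one]
  neg_mem' := by
    intro a ha c hc
    have h : ∏ i, M.χ ((-a) i) (c i) = (∏ i, M.χ (a i) (c i))⁻¹ := by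
      rw [← Finset.prod_inv_distrib]
      exact Finset.prod_congr rfl fun i _ => M.neg_left (a i) (c i)
    rw [h, ha c hc, inv_one]

/-- The `Mᵀ`-dual of an additive code `C ≤ G^n`, for the transpose duality
`χ'_x(y) = χ_y(x)`: `C^{Mᵀ} = {x : ∏ i, χ_{c i}(x i) = 1 for all c ∈ C}`. -/
def dualTCode {n : ℕ} (M : Duality G) (C : AddSubgroup (Fin n → G)) :
    AddSubgroup (Fin n → G) where
  carrier := {x | ∀ c ∈ C, ∏ i, M.χ (c i) (x i) = 1}
  zero_mem' := by
    intro c _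
    simp [Duality.zero_right]
  add_mem' := by
    intro a b ha hb d hd
    have h : ∏ i, M.χ (d i) ((a + b) i)
        = (∏ i, M.χ (d i) (a i)) * ∏ i, M.χ (d i) (b i) := by
      rw [← Finset.prod_mul_distrib]
      exact Finset.prod_congr rfl fun i _ => M.add_right (d i) (a i) (b i)
    rw [h, ha d hd, hb d hd, mul_one]
  neg_mem' := by
    intro a ha d hd
    have h : ∏ i, M.χ (d i) ((-a) i) = (∏ i, M.χ (d i) (a i))⁻¹ := by
      rw [← Finset.prod_inv_distrib]
      exact Finset.prod_congr rfl fun i _ => M.neg_right (a i) (d i)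
    rw [h, ha d hd, inv_one]

/-- The `M`-dual of a length-one additive code `C ≤ G`. -/
def dualOne (M : Duality G) (C : AddSubgroup G) : AddSubgroup G where
  carrier := {y | ∀ c ∈ C, M.χ y c = 1}
  zero_mem' := by intro c _; exact M.zero_left c
  add_mem' := by
    intro a b ha hb c hc
    rw [M.add_left a b c, ha c hc, hb c hc, mul_one]
  neg_mem' := by
    intro a ha c hc
    rw [M.neg_left a c, ha c hc, inv_one]

/-- The character `χ` extended coordinatewise to vectors:
`χ_u(v) = ∏ i, χ_{u i}(v i)`. -/
def chiVec {n : ℕ} (M : Duality G) (u v : Fin n → G) : ℂˣ :=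
  ∏ i, M.χ (u i) (v i)

end Duality


lemma pairing_swap_aux {H : Type*} [AddCommGroup H] [Fintype H] (B : H → H → ℂˣ)
    (hl : ∀ x y z : H, B (x + y) z = B x z * B y z)
    (hr : ∀ x y z : H, B x (y + z) = B x y * B x z)
    (C : AddSubgroup H)
    (h : ∀ a ∈ C, (∀ c ∈ C, B a c = 1) → a = 0) :
    ∀ a ∈ C, (∀ c ∈ C, B c a = 1) → a = 0 := by
  classical
  have hzl : ∀ z : H, B 0 z = 1 := by
    intro z
    have := hl 0 0 z
    rw [add_zero] at this
    exact left_eq_mul.mp this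
  have hzr : ∀ z : H, B z 0 = 1 := by
    intro z
    have := hr z 0 0
    rw [add_zero] at this
    exact left_eq_mul.mp this
  have hnl : ∀ x z : H, B (-x) z = (B x z)⁻¹ := by
    intro x z
    have := hl x (-x) z
    rw [add_neg_cancel, hzl] at this
    exact (inv_eq_of_mul_eq_one_right this.symm).symm
  -- the map `Φ : C → AddChar C ℂ`, `a ↦ (c ↦ B a c)`
  let Φ : C → AddChar C ℂ := fun a =>
    { toFun := fun c => (B a.1 c.1 : ℂ)
      map_zero_eq_one' := by
        simp only [ZeroMemClass.coe_zero, hzr, Units.val_one]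
      map_add_eq_mul' := fun c d => by
        show ((B a.1 ((c + d : C) : H) : ℂˣ) : ℂ) = _
        rw [AddSubgroup.coe_add, hr a.1 c.1 d.1, Units.val_mul] }
  have hΦ : Function.Injective Φ := by
    intro a b hab
    have key : ∀ c ∈ C, B (a.1 - b.1) c = 1 := by
      intro c hc
      have h1 : (B a.1 c : ℂ) = (B b.1 c : ℂ) := by
        have := DFunLike.congr_fun hab (⟨c, hc⟩ : C)
        simpa [Φ] using this
      have h2 : B a.1 c = B b.1 c := Units.ext h1
      rw [sub_eq_add_neg, hl, hnl, h2, mul_inv_cancel]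
    have := h (a.1 - b.1) (sub_mem a.2 b.2) key
    exact Subtype.ext (sub_eq_zero.mp this)
  have hΦsurj : Function.Surjective Φ := by
    have hcard : Fintype.card C = Fintype.card (AddChar C ℂ) :=
      (AddChar.card_eq (α := C)).symm
    exact (Fintype.bijective_iff_injective_and_card Φ).mpr ⟨hΦ, hcard⟩ |>.2
  intro a ha haT
  by_contra hne
  have hne' : (⟨a, ha⟩ : C) ≠ 0 := fun he => hne (congrArg Subtype.val he)
  obtain ⟨ψ, hψ⟩ := AddChar.exists_apply_ne_zero.mpr hne'
  obtain ⟨b, rfl⟩ := hΦsurj ψ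
  apply hψ
  have : B b.1 a = 1 := haT b.1 b.2
  simp [Φ, this]

/-- `C ∩ C^M = {0}` iff `C ∩ C^{Mᵀ} = {0}`, where `Mᵀ` is the
transpose duality `χ'_x(y) = χ_y(x)`. -/
theorem acd_iff_acd_transpose {G : Type*} [AddCommGroup G] [Fintype G]
    (M : Duality G) {n : ℕ} (C : AddSubgroup (Fin n → G)) :
    C ⊓ M.dualCode C = ⊥ ↔ C ⊓ M.dualTCode C = ⊥ := by
  have hmem : ∀ x : Fin n → G, x ∈ M.dualCode C ↔ ∀ c ∈ C, ∏ i, M.χ (x i) (c i) = 1 :=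
    fun x => Iff.rfl
  have hmemT : ∀ x : Fin n → G, x ∈ M.dualTCode C ↔ ∀ c ∈ C, ∏ i, M.χ (c i) (x i) = 1 :=
    fun x => Iff.rfl
  have hl : ∀ x y z : Fin n → G,
      (∏ i, M.χ ((x + y) i) (z i)) = (∏ i, M.χ (x i) (z i)) * ∏ i, M.χ (y i) (z i) := by
    intro x y z
    rw [← Finset.prod_mul_distrib]
    exact Finset.prod_congr rfl fun i _ => M.add_left (x i) (y i) (z i)
  have hr : ∀ x y z : Fin n → G,
      (∏ i, M.χ (x i) ((y + z) i)) = (∏ i, M.χ (x i) (y i)) * ∏ i, M.χ (x i) (z i) := by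
    intro x y z
    rw [← Finset.prod_mul_distrib]
    exact Finset.prod_congr rfl fun i _ => M.add_right (x i) (y i) (z i)
  simp only [AddSubgroup.eq_bot_iff_forall, AddSubgroup.mem_inf]
  constructor
  · intro h x hx
    refine pairing_swap_aux (fun a c => ∏ i, M.χ (a i) (c i)) hl hr C
      (fun a ha hac => h a ⟨ha, (hmem a).mpr hac⟩) x hx.1 ((hmemT x).mp hx.2)
  · intro h x hx
    refine pairing_swap_aux (fun a c => ∏ i, M.χ (c i) (a i))
      (fun x y z => hr z x y) (fun x y z => hl y z x) C
      (fun a ha hac => h a ⟨ha, (hmemT a).mpr hac⟩) x hx.1 ((hmem x).mp hx.2)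
end

section
/- For every prime p, the number of invertible symmetric e×e matrices over F_p equals p^{k(k-1)}(p-1)(p^3-1)···(p^{2k-1}-1) when e = 2k-1, and p^{k(k+1)}(p-1)(p^3-1)···(p^{2k-1}-1) when e = 2k. -/
namespace SymMatCount

open Matrix

set_option linter.unusedSectionVars false

noncomputable def FF (K : Type*) [CommRing K] (n : ℕ) : ℕ :=
  Nat.card {A : Matrix (Fin n) (Fin n) K // A.IsSymm ∧ IsUnit A.det}

section FieldCount

variable {K : Type*} [Field K] [Fintype K] [DecidableEq K]

variable (K) in
noncomputable def cardS (ι : Type*) [Fintype ι] [DecidableEq ι] : ℕ :=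
  Nat.card {A : Matrix ι ι K // A.IsSymm ∧ IsUnit A.det}

lemma cardS_reindex {ι κ : Type*} [Fintype ι] [DecidableEq ι] [Fintype κ] [DecidableEq κ]
    (e : ι ≃ κ) : cardS K ι = cardS K κ := by
  refine Nat.card_congr (Equiv.subtypeEquiv (reindex e e) fun A => ?_)
  rw [Matrix.IsSymm, Matrix.IsSymm, transpose_reindex, det_reindex_self,
    Equiv.apply_eq_iff_eq]

lemma cardS_eq_FF (ι : Type*) [Fintype ι] [DecidableEq ι] :
    cardS K ι = FF K (Fintype.card ι) :=
  cardS_reindex (Fintype.equivFin ι)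

/-- the bordered matrix -/
def A0 {ι : Type*} (b : ι → K) (C : Matrix ι ι K) : Matrix (Unit ⊕ ι) (Unit ⊕ ι) K :=
  fromBlocks 0 (replicateRow Unit b) (replicateCol Unit b) C

noncomputable def congEquiv {ι : Type*} [Fintype ι] [DecidableEq ι] (g : Matrix ι ι K)
    (hg : IsUnit g.det) : Matrix ι ι K ≃ Matrix ι ι K where
  toFun C := g * C * gᵀ
  invFun C := g⁻¹ * C * gᵀ⁻¹
  left_inv C := by
    simp only [Matrix.mul_assoc]
    rw [Matrix.mul_nonsing_inv gᵀ (by rwa [det_transpose]), Matrix.mul_one,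
      ← Matrix.mul_assoc, Matrix.nonsing_inv_mul g hg, Matrix.one_mul]
  right_inv C := by
    simp only [Matrix.mul_assoc]
    rw [Matrix.nonsing_inv_mul gᵀ (by rwa [det_transpose]), Matrix.mul_one,
      ← Matrix.mul_assoc, Matrix.mul_nonsing_inv g hg, Matrix.one_mul]

lemma isSymm_congEquiv {ι : Type*} [Fintype ι] [DecidableEq ι] (g : Matrix ι ι K)
    (hg : IsUnit g.det) (C : Matrix ι ι K) :
    (congEquiv g hg C).IsSymm ↔ C.IsSymm := by
  have h : (congEquiv g hg C)ᵀ = congEquiv g hg Cᵀ := by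
    simp [congEquiv, transpose_mul, Matrix.mul_assoc]
  rw [Matrix.IsSymm, Matrix.IsSymm, h, (congEquiv g hg).injective.eq_iff]

lemma A0_cong {ι : Type*} [Fintype ι] [DecidableEq ι] (g : Matrix ι ι K)
    (b : ι → K) (C : Matrix ι ι K) :
    A0 (g *ᵥ b) (g * C * gᵀ)
      = fromBlocks 1 0 0 g * A0 b C * (fromBlocks 1 0 0 g)ᵀ := by
  rw [A0, A0, fromBlocks_transpose, fromBlocks_multiply, fromBlocks_multiply]
  simp only [Matrix.mul_zero, Matrix.zero_mul, Matrix.one_mul, Matrix.mul_one,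
    add_zero, zero_add, transpose_zero, transpose_one]
  rw [← replicateCol_mulVec, ← Matrix.vecMul_transpose, ← replicateRow_vecMul]

lemma card_fib_congr {ι : Type*} [Fintype ι] [DecidableEq ι] (g : Matrix ι ι K)
    (hg : IsUnit g.det) (b : ι → K) :
    Nat.card {C : Matrix ι ι K // C.IsSymm ∧ IsUnit (A0 b C).det}
      = Nat.card {C : Matrix ι ι K // C.IsSymm ∧ IsUnit (A0 (g *ᵥ b) C).det} := by
  refine Nat.card_congr (Equiv.subtypeEquiv (congEquiv g hg) fun C => ?_)
  rw [isSymm_congEquiv]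
  have h : (congEquiv g hg C) = g * C * gᵀ := rfl
  rw [h, A0_cong, and_congr_right_iff]
  intro _
  have hM : IsUnit (fromBlocks (1 : Matrix Unit Unit K) 0 0 g).det := by
    rw [det_fromBlocks_zero₂₁, det_one, one_mul]; exact hg
  rw [det_mul, det_mul, det_transpose, IsUnit.mul_iff, IsUnit.mul_iff]
  constructor
  · intro h'; exact ⟨⟨hM, h'⟩, by rwa [det_fromBlocks_zero₂₁, det_one, one_mul]⟩
  · rintro ⟨⟨-, h'⟩, -⟩; exact h'


-- Schur for the a ≠ 0 case
lemma isUnit_det_aux2 {ι : Type*} [Fintype ι] [DecidableEq ι] (a : K) (ha : a ≠ 0)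
    (b : ι → K) (D : Matrix ι ι K) :
    IsUnit (fromBlocks (of fun _ _ => a) (replicateRow Unit b) (replicateCol Unit b)
      (D + a⁻¹ • (replicateCol Unit b * replicateRow Unit b))).det ↔ IsUnit D.det := by
  letI : Invertible (of fun _ _ => a : Matrix Unit Unit K) :=
    ⟨of fun _ _ => a⁻¹,
     by ext i j; simp [Matrix.mul_apply, inv_mul_cancel₀ ha],
     by ext i j; simp [Matrix.mul_apply, mul_inv_cancel₀ ha]⟩
  rw [det_fromBlocks₁₁]
  have h1 : replicateCol Unit b * ⅟(of fun _ _ => a : Matrix Unit Unit K) * replicateRow Unit b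
      = a⁻¹ • (replicateCol Unit b * replicateRow Unit b) := by
    have : ⅟(of fun _ _ => a : Matrix Unit Unit K) = of fun _ _ => a⁻¹ := rfl
    rw [this]
    ext i j
    simp [Matrix.mul_apply, Fintype.sum_sum_type]
    ring
  rw [h1, add_sub_cancel_right]
  have h2 : (of fun _ _ => a : Matrix Unit Unit K).det = a := by
    simp [det_unique]
  rw [h2, IsUnit.mul_iff]
  simp [isUnit_iff_ne_zero, ha]

-- Schur for the a = 0 case
lemma isUnit_det_aux {κ : Type*} [Fintype κ] [DecidableEq κ] (c : K) (d : κ → K)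
    (E : Matrix κ κ K) :
    IsUnit (A0 (Sum.elim 1 0)
      (fromBlocks (of fun _ _ => c) (replicateRow Unit d) (replicateCol Unit d) E)).det ↔ IsUnit E.det := by
  set P : Matrix (Unit ⊕ Unit) (Unit ⊕ Unit) K :=
    fromBlocks 0 1 1 (of fun _ _ => c) with hP
  set B : Matrix (Unit ⊕ Unit) κ K := of fun u j => Sum.elim (fun _ => (0:K)) (fun _ => d j) u
    with hB
  set C' : Matrix κ (Unit ⊕ Unit) K := of fun j u => Sum.elim (fun _ => (0:K)) (fun _ => d j) u
    with hC
  have hA : (A0 (Sum.elim 1 0)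
        (fromBlocks (of fun _ _ => c) (replicateRow Unit d) (replicateCol Unit d) E)).det
      = (fromBlocks P B C' E).det := by
    rw [← det_reindex_self (Equiv.sumAssoc Unit Unit κ) (fromBlocks P B C' E)]
    congr 1
    ext i j
    rcases i with i | i | i <;> rcases j with j | j | j <;>
      simp [A0, reindex_apply, submatrix_apply, fromBlocks, hP, hB, hC, Matrix.one_apply]
  letI : Invertible P :=
    ⟨fromBlocks (of fun _ _ => -c) 1 1 0,
     by ext i j
        rcases i with i | i <;> rcases j with j | j <;>
          simp [hP, Matrix.mul_apply, Fintype.sum_sum_type, fromBlocks, Matrix.one_apply],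
     by ext i j
        rcases i with i | i <;> rcases j with j | j <;>
          simp [hP, Matrix.mul_apply, Fintype.sum_sum_type, fromBlocks, Matrix.one_apply]⟩
  rw [hA, det_fromBlocks₁₁]
  have hz : C' * ⅟P * B = 0 := by
    have hinv : ⅟P = fromBlocks (of fun _ _ => -c) 1 1 0 := rfl
    ext i j
    simp [hinv, Matrix.mul_apply, Fintype.sum_sum_type, hB, hC, fromBlocks, Matrix.one_apply]
  rw [hz, sub_zero, IsUnit.mul_iff]
  exact and_iff_right (isUnit_det_of_invertible P)


lemma decomp {κ : Type*} (C : Matrix (Unit ⊕ κ) (Unit ⊕ κ) K) (hs : C.IsSymm) :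
    C = fromBlocks (of fun _ _ => C (.inl ()) (.inl ()))
        (replicateRow Unit (fun j => C (.inl ()) (.inr j)))
        (replicateCol Unit (fun j => C (.inl ()) (.inr j)))
        (of fun i j => C (.inr i) (.inr j)) := by
  ext i j
  rcases i with i | i <;> rcases j with j | j <;> simp [fromBlocks]
  exact (hs.apply _ _).symm

lemma card_fib_e0 {κ : Type*} [Fintype κ] [DecidableEq κ] :
    Nat.card {C : Matrix (Unit ⊕ κ) (Unit ⊕ κ) K //
        C.IsSymm ∧ IsUnit (A0 (Sum.elim 1 0) C).det}
      = Fintype.card K ^ (1 + Fintype.card κ) * cardS K κ := by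
  have e : {C : Matrix (Unit ⊕ κ) (Unit ⊕ κ) K //
        C.IsSymm ∧ IsUnit (A0 (Sum.elim 1 0) C).det}
      ≃ (K × (κ → K)) × {E : Matrix κ κ K // E.IsSymm ∧ IsUnit E.det} := by
    refine ⟨fun C => ((C.1 (.inl ()) (.inl ()), fun j => C.1 (.inl ()) (.inr j)),
        ⟨of fun i j => C.1 (.inr i) (.inr j), ?_, ?_⟩),
      fun x => ⟨fromBlocks (of fun _ _ => x.1.1) (replicateRow Unit x.1.2) (replicateCol Unit x.1.2) x.2.1,
        ?_, ?_⟩, ?_, ?_⟩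
    · ext i j
      exact C.2.1.apply _ _
    · exact (isUnit_det_aux _ _ _).mp (by rw [← decomp C.1 C.2.1]; exact C.2.2)
    · have h1 : (of fun _ _ => x.1.1 : Matrix Unit Unit K)ᵀ = of fun _ _ => x.1.1 := by
        ext; rfl
      rw [Matrix.IsSymm, fromBlocks_transpose, h1, transpose_replicateRow, transpose_replicateCol, x.2.2.1]
    · exact (isUnit_det_aux _ _ _).mpr x.2.2.2
    · intro C
      exact Subtype.ext (decomp C.1 C.2.1).symm
    · rintro ⟨⟨c, d⟩, E⟩
      refine Prod.ext (Prod.ext rfl rfl) (Subtype.ext ?_)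
      ext i j
      rfl
  rw [Nat.card_congr e, Nat.card_prod, Nat.card_prod, cardS,
    Nat.card_eq_fintype_card, Nat.card_eq_fintype_card (α := κ → K), Fintype.card_fun,
    pow_add, pow_one]

-- reindexing a fiber
lemma card_fib_reindex {ι κ : Type*} [Fintype ι] [DecidableEq ι] [Fintype κ] [DecidableEq κ]
    (e : ι ≃ κ) (b : ι → K) :
    Nat.card {C : Matrix ι ι K // C.IsSymm ∧ IsUnit (A0 b C).det}
      = Nat.card {C : Matrix κ κ K // C.IsSymm ∧ IsUnit (A0 (b ∘ e.symm) C).det} := by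
  refine Nat.card_congr (Equiv.subtypeEquiv (reindex e e) fun C => ?_)
  have hsymm : (reindex e e C).IsSymm ↔ C.IsSymm := by
    rw [Matrix.IsSymm, Matrix.IsSymm, transpose_reindex, Equiv.apply_eq_iff_eq]
  rw [hsymm, and_congr_right_iff]
  intro _
  have hA : A0 (b ∘ e.symm) (reindex e e C)
      = reindex ((Equiv.refl Unit).sumCongr e) ((Equiv.refl Unit).sumCongr e) (A0 b C) := by
    ext i j
    rcases i with i | i <;> rcases j with j | j <;>
      simp [A0, reindex_apply, submatrix_apply, fromBlocks, Equiv.sumCongr]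
  rw [hA, det_reindex_self]

lemma card_fib_ne {ι : Type*} [Fintype ι] [DecidableEq ι] (b : ι → K) (hb : b ≠ 0) :
    Nat.card {C : Matrix ι ι K // C.IsSymm ∧ IsUnit (A0 b C).det}
      = Fintype.card K ^ (Fintype.card ι) * FF K (Fintype.card ι - 1) := by
  obtain ⟨i0, hi0⟩ := Function.ne_iff.mp hb
  have hi0 : b i0 ≠ 0 := hi0
  let u : {i : ι // i = i0} ≃ Unit :=
    ⟨fun _ => (), fun _ => ⟨i0, rfl⟩, fun x => Subtype.ext x.2.symm, fun _ => rfl⟩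
  let e : ι ≃ Unit ⊕ {i : ι // i ≠ i0} :=
    (Equiv.sumCompl (· = i0)).symm.trans (u.sumCongr (Equiv.refl {i : ι // i ≠ i0}))
  have hb'inl : (b ∘ e.symm) (Sum.inl ()) = b i0 := rfl
  let b1 : Unit ⊕ {i : ι // i ≠ i0} → K := Sum.elim (fun _ => 1) (fun _ => 0)
  have hb1 : b1 = (Sum.elim 1 0 : Unit ⊕ {i : ι // i ≠ i0} → K) := rfl
  let g : Matrix (Unit ⊕ {i : ι // i ≠ i0}) (Unit ⊕ {i : ι // i ≠ i0}) K :=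
    1 + replicateCol Unit (b ∘ e.symm - b1) * replicateRow Unit b1
  have hgdet : IsUnit g.det := by
    show IsUnit (1 + replicateCol Unit (b ∘ e.symm - b1) * replicateRow Unit b1).det
    rw [det_one_add_replicateCol_mul_replicateRow]
    have h : b1 ⬝ᵥ (b ∘ e.symm - b1) = (b ∘ e.symm) (Sum.inl ()) - 1 := by
      simp [b1, dotProduct, Fintype.sum_sum_type]
    rw [h, hb'inl]
    simp only [add_sub_cancel]
    exact (isUnit_iff_ne_zero).mpr hi0
  have hgb : g *ᵥ b1 = b ∘ e.symm := by
    ext i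
    rcases i with i | i <;>
      simp [g, b1, mulVec, dotProduct, Fintype.sum_sum_type, Matrix.add_apply,
        Matrix.one_apply, hb'inl, Matrix.mul_apply, Matrix.replicateCol, Matrix.replicateRow] <;> ring
  have h1 := card_fib_reindex e b
  have h2 := card_fib_congr g hgdet b1
  rw [hgb, hb1] at h2
  rw [h1, ← h2, card_fib_e0, cardS_eq_FF]
  have hcard : Fintype.card {i : ι // i ≠ i0} = Fintype.card ι - 1 := by
    rw [Fintype.card_subtype_compl, Fintype.card_subtype_eq]
  have hpos : 0 < Fintype.card ι := Fintype.card_pos_iff.mpr ⟨i0⟩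
  rw [hcard]
  have h3 : 1 + (Fintype.card ι - 1) = Fintype.card ι := by omega
  rw [h3]

lemma nat_card_sigma {A : Type*} [Fintype A] (f : A → Type*) [∀ a, Finite (f a)] :
    Nat.card (Σ a, f a) = ∑ a, Nat.card (f a) := by
  haveI := fun a => Fintype.ofFinite (f a)
  simp [Nat.card_eq_fintype_card]

lemma card_T0 {ι : Type*} [Fintype ι] [DecidableEq ι] :
    Nat.card {A : Matrix (Unit ⊕ ι) (Unit ⊕ ι) K //
        (A.IsSymm ∧ IsUnit A.det) ∧ A (.inl ()) (.inl ()) = 0}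
      = (Fintype.card K ^ Fintype.card ι - 1)
        * (Fintype.card K ^ Fintype.card ι * FF K (Fintype.card ι - 1)) := by
  classical
  have e : {A : Matrix (Unit ⊕ ι) (Unit ⊕ ι) K //
        (A.IsSymm ∧ IsUnit A.det) ∧ A (.inl ()) (.inl ()) = 0}
      ≃ Σ _b : {b : ι → K // b ≠ 0},
          {C : Matrix ι ι K // C.IsSymm ∧ IsUnit (A0 _b.1 C).det} := by
    refine ⟨fun A => ⟨⟨fun i => A.1 (.inl ()) (.inr i), ?_⟩,
        ⟨of fun i j => A.1 (.inr i) (.inr j), ?_, ?_⟩⟩,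
      fun x => ⟨A0 x.1.1 x.2.1, ⟨?_, ?_⟩, ?_⟩, ?_, ?_⟩
    · intro h0
      have hrow : ∀ j, A.1 (.inl ()) j = 0 := by
        rintro (j | j)
        · exact A.2.2
        · exact congrFun h0 j
      have hz : A.1.det = 0 := det_eq_zero_of_row_eq_zero (Sum.inl ()) hrow
      have hu := A.2.1.2
      rw [hz] at hu
      exact not_isUnit_zero hu
    · ext i j
      exact A.2.1.1.apply _ _
    · have hd := decomp A.1 A.2.1.1
      have h0 : (of fun _ _ => A.1 (.inl ()) (.inl ()) : Matrix Unit Unit K) = 0 := by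
        ext
        exact A.2.2
      have hA : A.1 = A0 (fun i => A.1 (.inl ()) (.inr i))
          (of fun i j => A.1 (.inr i) (.inr j)) := by
        rw [A0, ← h0]
        exact hd
      rw [← hA]
      exact A.2.1.2
    · rw [Matrix.IsSymm, A0, fromBlocks_transpose, transpose_replicateRow, transpose_replicateCol,
        transpose_zero, x.2.2.1]
    · exact x.2.2.2
    · rfl
    · intro A
      refine Subtype.ext ?_
      have hd := decomp A.1 A.2.1.1
      have h0 : (of fun _ _ => A.1 (.inl ()) (.inl ()) : Matrix Unit Unit K) = 0 := by
        ext
        exact A.2.2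
      have hA : A.1 = A0 (fun i => A.1 (.inl ()) (.inr i))
          (of fun i j => A.1 (.inr i) (.inr j)) := by
        rw [A0, ← h0]
        exact hd
      exact hA.symm
    · intro x
      rfl
  rw [Nat.card_congr e, nat_card_sigma]
  rw [Finset.sum_congr rfl (fun b _ => card_fib_ne b.1 b.2), Finset.sum_const,
    Finset.card_univ, smul_eq_mul]
  congr 1
  rw [Fintype.card_subtype_compl, Fintype.card_subtype_eq, Fintype.card_fun]

lemma card_T1 {ι : Type*} [Fintype ι] [DecidableEq ι] :
    Nat.card {A : Matrix (Unit ⊕ ι) (Unit ⊕ ι) K //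
        (A.IsSymm ∧ IsUnit A.det) ∧ A (.inl ()) (.inl ()) ≠ 0}
      = (Fintype.card K - 1) * (Fintype.card K ^ Fintype.card ι * cardS K ι) := by
  classical
  have key : ∀ (a : K) (_ : a ≠ 0) (b : ι → K),
      (replicateCol Unit b * replicateRow Unit b : Matrix ι ι K)ᵀ = replicateCol Unit b * replicateRow Unit b := by
    intro a ha b
    rw [transpose_mul, transpose_replicateRow, transpose_replicateCol]
  have e : {A : Matrix (Unit ⊕ ι) (Unit ⊕ ι) K //
        (A.IsSymm ∧ IsUnit A.det) ∧ A (.inl ()) (.inl ()) ≠ 0}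
      ≃ ({a : K // a ≠ 0} × (ι → K)) × {D : Matrix ι ι K // D.IsSymm ∧ IsUnit D.det} := by
    refine ⟨fun A => ((⟨A.1 (.inl ()) (.inl ()), A.2.2⟩, fun i => A.1 (.inl ()) (.inr i)),
        ⟨(of fun i j => A.1 (.inr i) (.inr j))
          - (A.1 (.inl ()) (.inl ()))⁻¹
            • (replicateCol Unit (fun i => A.1 (.inl ()) (.inr i))
               * replicateRow Unit (fun i => A.1 (.inl ()) (.inr i))), ?_, ?_⟩),
      fun x => ⟨fromBlocks (of fun _ _ => x.1.1.1) (replicateRow Unit x.1.2) (replicateCol Unit x.1.2)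
          (x.2.1 + x.1.1.1⁻¹ • (replicateCol Unit x.1.2 * replicateRow Unit x.1.2)), ⟨?_, ?_⟩, ?_⟩, ?_, ?_⟩
    · have h1 : (of fun i j => A.1 (.inr i) (.inr j) : Matrix ι ι K)ᵀ
          = of fun i j => A.1 (.inr i) (.inr j) := by
        ext i j
        exact A.2.1.1.apply _ _
      rw [Matrix.IsSymm, transpose_sub, transpose_smul, h1, key _ A.2.2]
    · have hd := decomp A.1 A.2.1.1
      have hA : A.1 = fromBlocks (of fun _ _ => A.1 (.inl ()) (.inl ()))
          (replicateRow Unit (fun i => A.1 (.inl ()) (.inr i)))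
          (replicateCol Unit (fun i => A.1 (.inl ()) (.inr i)))
          (((of fun i j => A.1 (.inr i) (.inr j))
            - (A.1 (.inl ()) (.inl ()))⁻¹
              • (replicateCol Unit (fun i => A.1 (.inl ()) (.inr i))
                 * replicateRow Unit (fun i => A.1 (.inl ()) (.inr i))))
           + (A.1 (.inl ()) (.inl ()))⁻¹
              • (replicateCol Unit (fun i => A.1 (.inl ()) (.inr i))
                 * replicateRow Unit (fun i => A.1 (.inl ()) (.inr i)))) := by
        rw [sub_add_cancel]
        exact hd
      exact (isUnit_det_aux2 _ A.2.2 _ _).mp (by rw [← hA]; exact A.2.1.2)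
    · have h1 : (of fun _ _ => x.1.1.1 : Matrix Unit Unit K)ᵀ = of fun _ _ => x.1.1.1 := by
        ext
        rfl
      rw [Matrix.IsSymm, fromBlocks_transpose, h1, transpose_replicateRow, transpose_replicateCol,
        transpose_add, transpose_smul, x.2.2.1, key _ x.1.1.2]
    · exact (isUnit_det_aux2 _ x.1.1.2 _ _).mpr x.2.2.2
    · exact x.1.1.2
    · intro A
      refine Subtype.ext ?_
      show fromBlocks _ _ _ _ = A.1
      rw [sub_add_cancel]
      exact (decomp A.1 A.2.1.1).symm
    · intro x
      refine Prod.ext (Prod.ext rfl rfl) (Subtype.ext ?_)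
      show (x.2.1 + _) - _ = x.2.1
      exact add_sub_cancel_right _ _
  rw [Nat.card_congr e, Nat.card_prod, Nat.card_prod,
    Nat.card_eq_fintype_card (α := {a : K // a ≠ 0}),
    Nat.card_eq_fintype_card (α := ι → K), Fintype.card_fun,
    Fintype.card_subtype_compl, Fintype.card_subtype_eq, cardS, mul_assoc]

lemma cardS_split {ι : Type*} [Fintype ι] [DecidableEq ι] :
    cardS K (Unit ⊕ ι)
      = Nat.card {A : Matrix (Unit ⊕ ι) (Unit ⊕ ι) K //
          (A.IsSymm ∧ IsUnit A.det) ∧ A (.inl ()) (.inl ()) = 0}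
        + Nat.card {A : Matrix (Unit ⊕ ι) (Unit ⊕ ι) K //
          (A.IsSymm ∧ IsUnit A.det) ∧ A (.inl ()) (.inl ()) ≠ 0} := by
  classical
  rw [cardS]
  have e1 : {A : Matrix (Unit ⊕ ι) (Unit ⊕ ι) K // A.IsSymm ∧ IsUnit A.det}
      ≃ {x : {A : Matrix (Unit ⊕ ι) (Unit ⊕ ι) K // A.IsSymm ∧ IsUnit A.det} //
            x.1 (.inl ()) (.inl ()) = 0}
        ⊕ {x : {A : Matrix (Unit ⊕ ι) (Unit ⊕ ι) K // A.IsSymm ∧ IsUnit A.det} //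
            ¬ x.1 (.inl ()) (.inl ()) = 0} :=
    (Equiv.sumCompl _).symm
  have e2 : {x : {A : Matrix (Unit ⊕ ι) (Unit ⊕ ι) K // A.IsSymm ∧ IsUnit A.det} //
        x.1 (.inl ()) (.inl ()) = 0}
      ≃ {A : Matrix (Unit ⊕ ι) (Unit ⊕ ι) K //
          (A.IsSymm ∧ IsUnit A.det) ∧ A (.inl ()) (.inl ()) = 0} :=
    ⟨fun x => ⟨x.1.1, x.1.2, x.2⟩, fun A => ⟨⟨A.1, A.2.1⟩, A.2.2⟩,
      fun _ => rfl, fun _ => rfl⟩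
  have e3 : {x : {A : Matrix (Unit ⊕ ι) (Unit ⊕ ι) K // A.IsSymm ∧ IsUnit A.det} //
        ¬ x.1 (.inl ()) (.inl ()) = 0}
      ≃ {A : Matrix (Unit ⊕ ι) (Unit ⊕ ι) K //
          (A.IsSymm ∧ IsUnit A.det) ∧ A (.inl ()) (.inl ()) ≠ 0} :=
    ⟨fun x => ⟨x.1.1, x.1.2, x.2⟩, fun A => ⟨⟨A.1, A.2.1⟩, A.2.2⟩,
      fun _ => rfl, fun _ => rfl⟩
  rw [Nat.card_congr e1, Nat.card_sum, Nat.card_congr e2, Nat.card_congr e3]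

lemma FF_rec (n : ℕ) :
    FF K (n + 2)
      = (Fintype.card K ^ (n+1) - 1) * (Fintype.card K ^ (n+1) * FF K n)
        + (Fintype.card K - 1) * (Fintype.card K ^ (n+1) * FF K (n+1)) := by
  have he : cardS K (Unit ⊕ Fin (n+1)) = FF K (n + 2) := by
    rw [cardS_eq_FF]
    congr 1
    simp only [Fintype.card_sum, Fintype.card_unit, Fintype.card_fin]
    omega
  rw [← he, cardS_split, card_T0, card_T1, cardS_eq_FF]
  simp only [Fintype.card_fin]
  norm_num


lemma FF_zero : FF K 0 = 1 := by
  rw [FF]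
  haveI : Unique {A : Matrix (Fin 0) (Fin 0) K // A.IsSymm ∧ IsUnit A.det} := by
    refine ⟨⟨⟨of fun i _ => i.elim0, ?_, ?_⟩⟩, ?_⟩
    · ext i j
      exact i.elim0
    · rw [Matrix.det_fin_zero]
      exact isUnit_one
    · intro x
      apply Subtype.ext
      ext i j
      exact i.elim0
  rw [Nat.card_unique]

lemma FF_one : FF K 1 = Fintype.card K - 1 := by
  classical
  have e : {A : Matrix (Fin 1) (Fin 1) K // A.IsSymm ∧ IsUnit A.det} ≃ {a : K // ¬ a = 0} := by
    refine ⟨fun A => ⟨A.1 0 0, ?_⟩, fun a => ⟨of fun _ _ => a.1, ?_, ?_⟩, ?_, ?_⟩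
    · intro h0
      have hz : A.1.det = 0 := by rw [Matrix.det_fin_one, h0]
      have hu := A.2.2
      rw [hz] at hu
      exact not_isUnit_zero hu
    · ext i j
      rfl
    · rw [Matrix.det_fin_one]
      exact (isUnit_iff_ne_zero).mpr a.2
    · intro A
      apply Subtype.ext
      ext i j
      have hi : i = 0 := Subsingleton.elim _ _
      have hj : j = 0 := Subsingleton.elim _ _
      rw [hi, hj]
      rfl
    · intro a
      rfl
  rw [FF, Nat.card_congr e, Nat.card_eq_fintype_card, Fintype.card_subtype_compl,
    Fintype.card_subtype_eq]



end FieldCount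

lemma arith1 (p x y P : ℕ) (hp : 1 ≤ p) (hx : 1 ≤ x) :
    (x - 1) * (x * (y * P)) + (p - 1) * (x * (y * x * P))
      = (y * x) * (P * (x * p - 1)) := by
  have h1 : (p - 1) * x = x * p - x := by
    rw [Nat.sub_mul, one_mul, Nat.mul_comm]
  have h2 : x ≤ x * p := Nat.le_mul_of_pos_right x hp
  have hc : (x - 1) + (p - 1) * x = x * p - 1 := by omega
  rw [← hc]
  have ha : ∀ a b : ℕ, a = x - 1 → b = (p-1) * x →
      a * (x * (y * P)) + (p - 1) * (x * (y * x * P)) = (y*x) * (P * (a + b)) := by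
    intro a b ha' hb'
    subst hb'
    ring
  exact ha _ _ rfl rfl

lemma arith2 (p w y P : ℕ) (hp : 1 ≤ p) :
    (w - 1) * (w * (y * P)) + (p - 1) * (w * (y * P * (w - 1)))
      = (y * w * p) * (P * (w - 1)) := by
  have hb : 1 + (p - 1) = p := by omega
  have ha : ∀ a b : ℕ, a = w - 1 → b = p - 1 →
      a * (w * (y * P)) + b * (w * (y * P * a)) = (y * w * (1 + b)) * (P * a) := by
    intro a b _ _
    ring
  have h := ha (w - 1) (p - 1) rfl rfl
  rw [hb] at h
  exact h

lemma main_ind (p : ℕ) (hp : p.Prime) : ∀ k : ℕ, 1 ≤ k →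
    FF (ZMod p) (2*k - 1) = p ^ (k*(k-1)) * ∏ i ∈ Finset.range k, (p ^ (2*i+1) - 1)
    ∧ FF (ZMod p) (2*k) = p ^ (k*(k+1)) * ∏ i ∈ Finset.range k, (p ^ (2*i+1) - 1) := by
  haveI := Fact.mk hp
  haveI : NeZero p := ⟨hp.ne_zero⟩
  have hq : Fintype.card (ZMod p) = p := ZMod.card p
  have hp1 : 1 ≤ p := hp.pos
  intro k hk
  induction k with
  | zero => omega
  | succ k ih =>
    by_cases hk0 : k = 0
    · subst hk0
      constructor
      · show FF (ZMod p) 1 = _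
        rw [FF_one, hq]
        simp
      · show FF (ZMod p) 2 = _
        have h2 := FF_rec (K := ZMod p) 0
        rw [FF_zero, FF_one, hq] at h2
        norm_num at h2
        rw [h2]
        obtain ⟨a, rfl⟩ : ∃ a, p = a + 1 := ⟨p - 1, by omega⟩
        simp [Nat.add_sub_cancel, Finset.prod_range_one]
        ring
    · have hk1 : 1 ≤ k := by omega
      obtain ⟨h1, h2⟩ := ih hk1
      have hodd : FF (ZMod p) (2*(k+1) - 1)
          = p ^ ((k+1)*k) * ∏ i ∈ Finset.range (k+1), (p ^ (2*i+1) - 1) := by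
        have hidx : 2*(k+1) - 1 = (2*k - 1) + 2 := by omega
        have hidx2 : (2*k - 1) + 1 = 2*k := by omega
        rw [hidx, FF_rec, hidx2, hq, h1, h2, Finset.prod_range_succ]
        have hx : 1 ≤ p ^ (2*k) := Nat.one_le_pow _ _ hp.pos
        have e1 : p ^ (k*(k+1)) = p ^ (k*(k-1)) * p ^ (2*k) := by
          rw [← pow_add]
          congr 1
          cases k with
          | zero => omega
          | succ j => simp only [Nat.add_sub_cancel]; ring
        have e2 : p ^ ((k+1)*k) = p ^ (k*(k-1)) * p ^ (2*k) := by
          rw [← pow_add]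
          congr 1
          cases k with
          | zero => omega
          | succ j => simp only [Nat.add_sub_cancel]; ring
        have e3 : p ^ (2*k+1) = p ^ (2*k) * p := by rw [pow_succ]
        rw [e1, e2, e3]
        have := arith1 p (p ^ (2*k)) (p ^ (k*(k-1)))
          (∏ i ∈ Finset.range k, (p ^ (2*i+1) - 1)) hp1 hx
        calc (p ^ (2*k) - 1) * (p ^ (2*k) * (p ^ (k*(k-1)) * ∏ i ∈ Finset.range k, (p ^ (2*i+1) - 1)))
              + (p - 1) * (p ^ (2*k) * (p ^ (k*(k-1)) * p ^ (2*k) * ∏ i ∈ Finset.range k, (p ^ (2*i+1) - 1)))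
            = (p ^ (k*(k-1)) * p ^ (2*k)) * ((∏ i ∈ Finset.range k, (p ^ (2*i+1) - 1)) * (p ^ (2*k) * p - 1)) := this
          _ = p ^ (k*(k-1)) * p ^ (2*k) * ((∏ i ∈ Finset.range k, (p ^ (2*i+1) - 1)) * (p ^ (2*k) * p - 1)) := by ring
      constructor
      · exact hodd
      · have hidx : 2*(k+1) = (2*k) + 2 := by omega
        have hidx2 : (2*k) + 1 = 2*(k+1) - 1 := by omega
        rw [hidx, FF_rec, hq, h2]
        rw [hidx2, hodd]
        have e1 : p ^ ((k+1)*(k+2)) = p ^ (k*(k+1)) * p ^ (2*k+1) * p := by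
          rw [← pow_add, ← pow_succ]
          congr 1
          ring
        have hidx3 : 2*(k+1) - 1 = 2*k + 1 := by omega
        rw [hidx3] at *
        have e4 : (k+1)*((k+1)+1) = (k+1)*(k+2) := by ring
        rw [e4, e1, Finset.prod_range_succ]
        have := arith2 p (p ^ (2*k+1)) (p ^ (k*(k+1)))
          (∏ i ∈ Finset.range k, (p ^ (2*i+1) - 1)) hp1
        calc (p ^ (2*k+1) - 1) * (p ^ (2*k+1) * (p ^ (k*(k+1)) * ∏ i ∈ Finset.range k, (p ^ (2*i+1) - 1)))
              + (p - 1) * (p ^ (2*k+1) * (p ^ ((k+1)*k) * ((∏ i ∈ Finset.range k, (p ^ (2*i+1) - 1)) * (p ^ (2*k+1) - 1))))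
            = (p ^ (k*(k+1)) * p ^ (2*k+1) * p) * ((∏ i ∈ Finset.range k, (p ^ (2*i+1) - 1)) * (p ^ (2*k+1) - 1)) := by
              have ekk : (k+1)*k = k*(k+1) := by ring
              rw [ekk, ← mul_assoc (p ^ (k*(k+1)))]
              have := arith2 p (p ^ (2*k+1)) (p ^ (k*(k+1)))
                (∏ i ∈ Finset.range k, (p ^ (2*i+1) - 1)) hp1
              linarith [this]
          _ = p ^ (k*(k+1)) * p ^ (2*k+1) * p * ((∏ i ∈ Finset.range k, (p ^ (2*i+1) - 1)) * (p ^ (2*k+1) - 1)) := by ring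


end SymMatCount

/-- The number of invertible symmetric `e × e` matrices over `F_p`
is `p^{k(k-1)}(p-1)(p^3-1)⋯(p^{2k-1}-1)` when `e = 2k-1`, and
`p^{k(k+1)}(p-1)(p^3-1)⋯(p^{2k-1}-1)` when `e = 2k`. -/
theorem card_invertible_symmetric_matrices (p k : ℕ) (hp : p.Prime) (hk : 1 ≤ k) :
    Nat.card {A : Matrix (Fin (2 * k - 1)) (Fin (2 * k - 1)) (ZMod p) //
        A.IsSymm ∧ IsUnit A.det}
      = p ^ (k * (k - 1)) * ∏ i ∈ Finset.range k, (p ^ (2 * i + 1) - 1) ∧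
    Nat.card {A : Matrix (Fin (2 * k)) (Fin (2 * k)) (ZMod p) //
        A.IsSymm ∧ IsUnit A.det}
      = p ^ (k * (k + 1)) * ∏ i ∈ Finset.range k, (p ^ (2 * i + 1) - 1) := by
  haveI := Fact.mk hp
  haveI : NeZero p := ⟨hp.ne_zero⟩
  obtain ⟨h1, h2⟩ := SymMatCount.main_ind p hp k hk
  exact ⟨h1, h2⟩
end

section
/- Let M be a skew-symmetric duality on (F_{p^{2e}}, +) (χ_x(x) = 1 for all x), ξ a fixed primitive p-th root of unity, and C an additive code with F_p-generator rows G_1, ..., G_{2s} satisfying χ_{G_i}(G_j) = ξ for all i < j. Then C ∩ C^M = {0}. -/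
open Finset in
private lemma aux_comb_acd {R : Type*} [CommRing R] (N : ℕ) (hN : Even N) (g : ℕ → R)
    (h : ∀ j < N, ∑ i ∈ Finset.range j, g i = ∑ i ∈ Finset.Ico (j + 1) N, g i) :
    ∀ i < N, g i = 0 := by
  intro i hi
  have hN0 : 0 < N := Nat.pos_of_ne_zero (by omega)
  have hstep : ∀ j, j + 1 < N → g (j + 1) = -g j := by
    intro j hj
    have h1 := h j (Nat.lt_of_succ_lt hj)
    have h2 := h (j + 1) hj
    rw [Finset.sum_range_succ, h1, Finset.sum_eq_sum_Ico_succ_bot hj] at h2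
    linear_combination h2
  have halt : ∀ i < N, g i = (-1 : R) ^ i * g 0 := by
    intro i
    induction i with
    | zero => simp
    | succ k ih =>
      intro hk
      rw [hstep k hk, ih (Nat.lt_of_succ_lt hk), pow_succ]
      ring
  have h0 := h 0 hN0
  simp only [Finset.range_zero, Finset.sum_empty] at h0
  have hsum : ∑ i ∈ Finset.range N, g i = g 0 := by
    rw [Finset.range_eq_Ico, Finset.sum_eq_sum_Ico_succ_bot hN0, ← h0, add_zero]
  have hsum2 : ∑ i ∈ Finset.range N, g i = 0 := by
    calc ∑ i ∈ Finset.range N, g i = ∑ i ∈ Finset.range N, (-1 : R) ^ i * g 0 :=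
          Finset.sum_congr rfl fun i hi => halt i (Finset.mem_range.mp hi)
      _ = (∑ i ∈ Finset.range N, (-1 : R) ^ i) * g 0 := by rw [Finset.sum_mul]
      _ = 0 := by rw [neg_one_geom_sum, if_pos hN, zero_mul]
  have hg0 : g 0 = 0 := by rw [← hsum, hsum2]
  rw [halt i hi, hg0, mul_zero]

private lemma zpow_finset_sum_acd {ι : Type*} (x : ℂˣ) (t : Finset ι) (a : ι → ℤ) :
    x ^ (∑ i ∈ t, a i) = ∏ i ∈ t, x ^ a i := by
  classical
  induction t using Finset.induction with
  | empty => simp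
  | insert _ _ hnotmem ih =>
    rw [Finset.sum_insert hnotmem, Finset.prod_insert hnotmem, zpow_add, ih]

namespace Duality

variable {G : Type*} [AddCommGroup G]

lemma chiVec_add_left {n : ℕ} (M : Duality G) (u v w : Fin n → G) :
    M.chiVec (u + v) w = M.chiVec u w * M.chiVec v w := by
  rw [chiVec, chiVec, chiVec, ← Finset.prod_mul_distrib]
  exact Finset.prod_congr rfl fun i _ => M.add_left (u i) (v i) (w i)

lemma chiVec_add_right {n : ℕ} (M : Duality G) (u v w : Fin n → G) :
    M.chiVec u (v + w) = M.chiVec u v * M.chiVec u w := by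
  rw [chiVec, chiVec, chiVec, ← Finset.prod_mul_distrib]
  exact Finset.prod_congr rfl fun i _ => M.add_right (u i) (v i) (w i)

/-- `chiVec · w` as an additive monoid hom into `Additive ℂˣ`. -/
def chiHom {n : ℕ} (M : Duality G) (w : Fin n → G) : (Fin n → G) →+ Additive ℂˣ :=
  AddMonoidHom.mk' (fun u => Additive.ofMul (M.chiVec u w)) fun u v => by
    simp [M.chiVec_add_left u v w, ← ofMul_mul]

lemma chiVec_zsmul_left {n : ℕ} (M : Duality G) (c : ℤ) (u w : Fin n → G) :
    M.chiVec (c • u) w = M.chiVec u w ^ c := by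
  have := map_zsmul (M.chiHom w) c u
  simpa [chiHom, ← ofMul_zpow] using this

lemma chiVec_zero_left' {n : ℕ} (M : Duality G) (w : Fin n → G) :
    M.chiVec 0 w = 1 := by
  simpa [chiHom] using map_zero (M.chiHom w)

lemma chiVec_sum_left {n N : ℕ} (M : Duality G) (u : Fin N → (Fin n → G)) (w : Fin n → G) :
    M.chiVec (∑ i, u i) w = ∏ i, M.chiVec (u i) w := by
  classical
  induction (Finset.univ : Finset (Fin N)) using Finset.induction with
  | empty => simp [M.chiVec_zero_left']
  | insert _ _ h ih => rw [Finset.sum_insert h, Finset.prod_insert h, chiVec_add_left, ih]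

lemma chiVec_self {n : ℕ} (M : Duality G) (hskew : ∀ x : G, M.χ x x = 1) (u : Fin n → G) :
    M.chiVec u u = 1 := by
  rw [chiVec]
  exact Finset.prod_eq_one fun i _ => hskew (u i)

lemma chiVec_anti {n : ℕ} (M : Duality G) (hskew : ∀ x : G, M.χ x x = 1) (u v : Fin n → G) :
    M.chiVec u v * M.chiVec v u = 1 := by
  have h := M.chiVec_self hskew (u + v)
  rw [chiVec_add_left, chiVec_add_right, chiVec_add_right, chiVec_self M hskew,
    chiVec_self M hskew, one_mul, mul_one] at h
  exact h

end Duality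

/-- If `M` is a skew-symmetric duality, `ξ` a primitive `p`-th root
of unity, and the generator rows `G_1, …, G_{2s}` satisfy `χ_{G_i}(G_j) = ξ` for
all `i < j`, then the generated code is ACD. -/
theorem acd_of_chi_eq_primitiveRoot (p e n s : ℕ) (hp : p.Prime)
    {F : Type*} [Field F] [Fintype F] (hcard : Fintype.card F = p ^ (2 * e))
    (M : Duality F) (hskew : ∀ x : F, M.χ x x = 1)
    (ξ : ℂˣ) (hξ : IsPrimitiveRoot ξ p)
    (rows : Fin (2 * s) → (Fin n → F))
    (h : ∀ i j : Fin (2 * s), i < j → M.chiVec (rows i) (rows j) = ξ) :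
    AddSubgroup.closure (Set.range rows) ⊓
      M.dualCode (AddSubgroup.closure (Set.range rows)) = ⊥ := by
  classical
  -- `F` has characteristic `p`.
  have hchar : CharP F p := by
    have h1 : CharP F (ringChar F) := ringChar.charP F
    have hq_prime : (ringChar F).Prime := CharP.char_is_prime F (ringChar F)
    obtain ⟨m, _, hm2⟩ := FiniteField.card F (ringChar F)
    have hdvd : ringChar F ∣ p ^ (2 * e) := by
      rw [← hcard, hm2]
      exact dvd_pow_self _ (by exact_mod_cast m.ne_zero)
    have heq : ringChar F = p :=
      (Nat.prime_dvd_prime_iff_eq hq_prime hp).mp (hq_prime.dvd_of_dvd_pow hdvd)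
    rwa [heq] at h1
  rw [eq_bot_iff]
  intro x hx
  rw [AddSubgroup.mem_inf] at hx
  obtain ⟨hx1, hx2⟩ := hx
  rw [← Submodule.span_int_eq_addSubgroupClosure, Submodule.mem_toAddSubgroup] at hx1
  obtain ⟨c, hc⟩ := Submodule.mem_span_range_iff_exists_fun ℤ |>.mp hx1
  set ε : Fin (2 * s) → Fin (2 * s) → ℤ :=
    fun i j => if (i : ℕ) < (j : ℕ) then 1 else if (j : ℕ) < (i : ℕ) then -1 else 0 with hε
  have hval : ∀ i j : Fin (2 * s), M.chiVec (rows i) (rows j) = ξ ^ ε i j := by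
    intro i j
    simp only [hε]
    rcases lt_trichotomy i j with hij | hij | hij
    · rw [if_pos (Fin.lt_def.mp hij), zpow_one]
      exact h i j hij
    · subst hij
      rw [if_neg (lt_irrefl _), if_neg (lt_irrefl _), zpow_zero]
      exact M.chiVec_self hskew (rows i)
    · have hji : (j : ℕ) < (i : ℕ) := Fin.lt_def.mp hij
      have hnij : ¬ (i : ℕ) < (j : ℕ) := by omega
      rw [if_neg hnij, if_pos hji, zpow_neg, zpow_one]
      have hm := M.chiVec_anti hskew (rows j) (rows i)
      rw [h j i hij] at hm
      exact eq_inv_of_mul_eq_one_right hm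
  have hdualj : ∀ j : Fin (2 * s), M.chiVec x (rows j) = 1 := fun j =>
    hx2 (rows j) (AddSubgroup.subset_closure (Set.mem_range_self j))
  have hdvdj : ∀ j : Fin (2 * s), (p : ℤ) ∣ ∑ i, ε i j * c i := by
    intro j
    rw [← hξ.zpow_eq_one_iff_dvd]
    calc ξ ^ (∑ i, ε i j * c i) = ∏ i, ξ ^ (ε i j * c i) :=
          zpow_finset_sum_acd ξ Finset.univ _
      _ = ∏ i, (ξ ^ ε i j) ^ c i := by
          refine Finset.prod_congr rfl fun i _ => ?_
          rw [← zpow_mul]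
      _ = ∏ i, M.chiVec (rows i) (rows j) ^ c i := by
          refine Finset.prod_congr rfl fun i _ => ?_
          rw [hval i j]
      _ = ∏ i, M.chiVec (c i • rows i) (rows j) := by
          refine Finset.prod_congr rfl fun i _ => ?_
          rw [M.chiVec_zsmul_left]
      _ = M.chiVec (∑ i, c i • rows i) (rows j) := (M.chiVec_sum_left _ _).symm
      _ = 1 := by rw [hc]; exact hdualj j
  set g : ℕ → ZMod p :=
    fun k => if hk : k < 2 * s then ((c ⟨k, hk⟩ : ℤ) : ZMod p) else 0 with hg
  have hzmod : ∀ j : Fin (2 * s),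
      ∑ k ∈ Finset.range (2 * s),
        (if k < (j : ℕ) then g k else if (j : ℕ) < k then -g k else 0) = 0 := by
    intro j
    have h0 : ((∑ i, ε i j * c i : ℤ) : ZMod p) = 0 :=
      (ZMod.intCast_zmod_eq_zero_iff_dvd _ p).mpr (hdvdj j)
    push_cast at h0
    have hterm : ∀ i : Fin (2 * s),
        (if (i : ℕ) < (j : ℕ) then g (i : ℕ) else if (j : ℕ) < (i : ℕ) then -g (i : ℕ) else 0)
          = ((ε i j : ℤ) : ZMod p) * ((c i : ℤ) : ZMod p) := by
      intro i
      have hgi : g (i : ℕ) = ((c i : ℤ) : ZMod p) := by simp [hg, i.is_lt]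
      simp only [hε, hgi]
      split_ifs <;> push_cast <;> ring
    calc ∑ k ∈ Finset.range (2 * s),
          (if k < (j : ℕ) then g k else if (j : ℕ) < k then -g k else 0)
        = ∑ i : Fin (2 * s),
          (if (i : ℕ) < (j : ℕ) then g (i : ℕ) else if (j : ℕ) < (i : ℕ) then -g (i : ℕ) else 0) :=
          (Fin.sum_univ_eq_sum_range
            (fun k => if k < (j : ℕ) then g k else if (j : ℕ) < k then -g k else 0) (2 * s)).symm
      _ = ∑ i : Fin (2 * s), ((ε i j : ℤ) : ZMod p) * ((c i : ℤ) : ZMod p) :=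
          Finset.sum_congr rfl fun i _ => hterm i
      _ = 0 := h0
  have hgzero : ∀ k < 2 * s, g k = 0 := by
    apply aux_comb_acd (2 * s) ⟨s, by omega⟩ g
    intro j hj
    have hz := hzmod ⟨j, hj⟩
    rw [Finset.range_eq_Ico,
      ← Finset.sum_Ico_consecutive _ (Nat.zero_le j) (le_of_lt hj),
      Finset.sum_eq_sum_Ico_succ_bot hj] at hz
    have e1 : ∑ k ∈ Finset.Ico 0 j, (if k < j then g k else if j < k then -g k else 0)
        = ∑ k ∈ Finset.range j, g k := by
      rw [← Finset.range_eq_Ico]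
      exact Finset.sum_congr rfl fun k hk => if_pos (Finset.mem_range.mp hk)
    have e2 : ∑ k ∈ Finset.Ico (j + 1) (2 * s),
          (if k < j then g k else if j < k then -g k else 0)
        = -∑ k ∈ Finset.Ico (j + 1) (2 * s), g k := by
      rw [← Finset.sum_neg_distrib]
      refine Finset.sum_congr rfl fun k hk => ?_
      obtain ⟨hk1, _⟩ := Finset.mem_Ico.mp hk
      rw [if_neg (by omega), if_pos (by omega)]
    rw [e1, e2] at hz
    simp only [lt_irrefl, if_false] at hz
    linear_combination hz
  have hcoef : ∀ i : Fin (2 * s), c i • rows i = 0 := by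
    intro i
    have hzero : ((c i : ℤ) : ZMod p) = 0 := by
      have := hgzero (i : ℕ) i.is_lt
      simpa [hg, i.is_lt] using this
    obtain ⟨k, hk⟩ := (ZMod.intCast_zmod_eq_zero_iff_dvd _ p).mp hzero
    rw [hk, mul_smul]
    funext t
    have hpF : (p : F) = 0 := CharP.cast_eq_zero F p
    simp only [Pi.smul_apply, Pi.zero_apply, zsmul_eq_mul]
    push_cast
    rw [hpF, zero_mul]
  have hx0 : x = 0 := by
    rw [← hc]
    exact Finset.sum_eq_zero fun i _ => hcoef i
  rw [AddSubgroup.mem_bot]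
  exact hx0
end
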